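/- For every n ≥ 1, the sum over r from 1 to n of r! times the signless Stirling number of the first kind s(n,r) equals the permanent of the n×n matrix M with M(i,i) = i and M(i,j) = 1 for i ≠ j. -/

import Mathlib

/-- The signless Stirling numbers of the first kind. -/
def stirling1 : ℕ → ℕ → ℕ
  | 0, 0 => 1
  | 0, _ + 1 => 0
  | _ + 1, 0 => 0
  | n + 1, r + 1 => n * stirling1 n (r + 1) + stirling1 n r

open Finset Polynomial Equiv

lemma stirling1_zero_mul (n : ℕ) : stirling1 n 0 * n = 0 := by
  cases n with
  | zero => simp
  | succ m => simp [stirling1]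

lemma coeff_prod_stirling (n r : ℕ) :
    (∏ j ∈ Finset.range n, ((X : Polynomial ℕ) + C (j : ℕ))).coeff r = stirling1 n r := by
  induction n generalizing r with
  | zero =>
    cases r <;> simp [stirling1, coeff_one]
  | succ n ih =>
    rw [Finset.prod_range_succ, mul_add, coeff_add, coeff_mul_C, ih]
    cases r with
    | zero =>
      rw [coeff_mul_X_zero]
      rw [zero_add, stirling1_zero_mul]; rfl
    | succ r =>
      rw [coeff_mul_X, ih]
      show stirling1 n r + stirling1 n (r + 1) * n = n * stirling1 n (r + 1) + stirling1 n r
      ring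

lemma card_fixing (n : ℕ) (S : Finset (Fin n)) :
    (Finset.univ.filter fun σ : Equiv.Perm (Fin n) => ∀ a ∈ S, σ a = a).card
      = Nat.factorial (n - S.card) := by
  classical
  rw [← Fintype.card_subtype]
  have e : {σ : Equiv.Perm (Fin n) // ∀ a ∈ S, σ a = a}
      ≃ Equiv.Perm {a : Fin n // ¬ a ∈ S} :=
    (Equiv.subtypeEquivRight (by intro σ; simp)).trans
      (Equiv.Perm.subtypeEquivSubtypePerm (fun a => ¬ a ∈ S)).symm
  rw [Fintype.card_congr e, Fintype.card_perm]
  congr 1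
  rw [Fintype.card_subtype_compl]
  simp [Fintype.card_coe]

theorem sum_factorial_stirling1_eq_permanent (n : ℕ) (hn : 1 ≤ n) :
    ∑ r ∈ Finset.Icc 1 n, r.factorial * stirling1 n r =
      ∑ σ : Equiv.Perm (Fin n), ∏ i : Fin n,
        (if σ i = i then (i : ℕ) + 1 else 1) := by
  classical
  have hprod : ∀ σ : Equiv.Perm (Fin n),
      (∏ i : Fin n, (if σ i = i then (i : ℕ) + 1 else 1)) =
      ∑ S ∈ (Finset.univ.filter fun i : Fin n => σ i = i).powerset, ∏ i ∈ S, (i : ℕ) := by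
    intro σ
    rw [← Finset.prod_filter, Finset.prod_add (fun i : Fin n => (i : ℕ)) (fun _ => 1)]
    simp
  have hpow : ∀ σ : Equiv.Perm (Fin n),
      (Finset.univ.filter fun i : Fin n => σ i = i).powerset =
        (Finset.univ : Finset (Fin n)).powerset.filter
          (fun S => ∀ a ∈ S, σ a = a) := by
    intro σ
    ext S
    simp [Finset.subset_iff]
  calc
    ∑ r ∈ Finset.Icc 1 n, r.factorial * stirling1 n r
        = ∑ k ∈ Finset.range (n + 1), Nat.factorial (n - k) * stirling1 n (n - k) := by
          have hr := Finset.sum_range_reflect (fun j => j.factorial * stirling1 n j) (n + 1)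
          simp only [Nat.add_sub_cancel] at hr
          rw [hr, Finset.range_eq_Ico,
            Finset.sum_eq_sum_Ico_succ_bot (Nat.succ_pos n) (fun j => j.factorial * stirling1 n j),
            Nat.succ_eq_add_one, Finset.Ico_add_one_right_eq_Icc]
          obtain ⟨m, rfl⟩ := Nat.exists_eq_add_of_le hn
          simp [stirling1]
          rw [Nat.add_comm]
          rfl
    _ = ∑ k ∈ Finset.range (n + 1), Nat.factorial (n - k) *
          ∑ S ∈ (Finset.univ : Finset (Fin n)).powersetCard k, ∏ i ∈ S, (i : ℕ) := by
          refine Finset.sum_congr rfl fun k hk => ?_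
          rw [Finset.mem_range, Nat.lt_succ_iff] at hk
          have h1 : n - k ≤ (Finset.univ : Finset (Fin n)).card := by simp [Nat.sub_le]
          have := Finset.prod_X_add_C_coeff (R := ℕ) (Finset.univ : Finset (Fin n))
            (fun i => (i : ℕ)) h1
          rw [Finset.card_univ, Fintype.card_fin, Nat.sub_sub_self hk] at this
          rw [← this, ← Finset.prod_range (fun j => (X : Polynomial ℕ) + C (j : ℕ)),
            coeff_prod_stirling]
    _ = ∑ k ∈ Finset.range (n + 1),
          ∑ S ∈ (Finset.univ : Finset (Fin n)).powersetCard k,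
            Nat.factorial (n - S.card) * ∏ i ∈ S, (i : ℕ) := by
          refine Finset.sum_congr rfl fun k _ => ?_
          rw [Finset.mul_sum]
          refine Finset.sum_congr rfl fun S hS => ?_
          rw [(Finset.mem_powersetCard.mp hS).2]
    _ = ∑ S ∈ (Finset.univ : Finset (Fin n)).powerset,
          Nat.factorial (n - S.card) * ∏ i ∈ S, (i : ℕ) := by
          rw [Finset.powerset_card_disjiUnion]
          simp only [Finset.card_univ, Fintype.card_fin]
          exact (Finset.sum_disjiUnion _ _ _).symm
    _ = ∑ S ∈ (Finset.univ : Finset (Fin n)).powerset,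
          ∑ σ : Equiv.Perm (Fin n),
            (if ∀ a ∈ S, σ a = a then ∏ i ∈ S, (i : ℕ) else 0) := by
          refine Finset.sum_congr rfl fun S _ => ?_
          rw [← Finset.sum_filter, Finset.sum_const, smul_eq_mul, card_fixing]
    _ = ∑ σ : Equiv.Perm (Fin n), ∏ i : Fin n,
          (if σ i = i then (i : ℕ) + 1 else 1) := by
          rw [Finset.sum_comm]
          refine Finset.sum_congr rfl fun σ _ => ?_
          rw [hprod σ, hpow σ, Finset.sum_filter]
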